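/- Let ι be a finite nonempty index set and p : ι → ℝ² with D = diam(p(ι)) ≥ 1 attained by indices a, b; let u = (p(a) − p(b))/D and z = w_{u⊥}(p(ι))/D. Let 0 ≤ Δt ≤ sin(½·arcsin z)/2 and let q : ι → ℝ² with ‖q(i) − p(i)‖ ≤ Δt for all i. Let D′ = diam(q(ι)) be attained by indices c, d, let u′ = (q(c) − q(d))/D′ and z′ = w_{u′⊥}(q(ι))/D′. Then z′ ≥ (sin(½·arcsin z) − 2Δt)/(1 + 2Δt). -/

import Mathlib

open Real
open scoped RealInnerProductSpace

noncomputable section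

/-- The point of `ℝ²` with coordinates `a`, `b`. -/
def pt (a b : ℝ) : EuclideanSpace ℝ (Fin 2) :=
  (WithLp.equiv 2 (Fin 2 → ℝ)).symm ![a, b]

/-- `v` rotated counterclockwise by `π/2`. -/
def perp (v : EuclideanSpace ℝ (Fin 2)) : EuclideanSpace ℝ (Fin 2) :=
  pt (-(v 1)) (v 0)

/-- The extent of a point set `P` along a vector `v`: `max_{p,q ∈ P} ⟨p − q, v⟩`. -/
def wext (v : EuclideanSpace ℝ (Fin 2)) (P : Set (EuclideanSpace ℝ (Fin 2))) : ℝ :=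
  sSup {x : ℝ | ∃ p ∈ P, ∃ q ∈ P, x = ⟪p - q, v⟫}

lemma perp_zero (v : EuclideanSpace ℝ (Fin 2)) : perp v 0 = -(v 1) := rfl
lemma perp_one (v : EuclideanSpace ℝ (Fin 2)) : perp v 1 = v 0 := rfl

lemma inner2 (x y : EuclideanSpace ℝ (Fin 2)) : ⟪x, y⟫ = x 0 * y 0 + x 1 * y 1 := by
  simp [PiLp.inner_apply, Fin.sum_univ_two, RCLike.inner_apply]; ring

lemma norm_sq2 (x : EuclideanSpace ℝ (Fin 2)) : ‖x‖ ^ 2 = x 0 ^ 2 + x 1 ^ 2 := by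
  rw [← real_inner_self_eq_norm_sq, inner2]; ring

lemma norm_perp (v : EuclideanSpace ℝ (Fin 2)) : ‖perp v‖ = ‖v‖ := by
  have h : ‖perp v‖ ^ 2 = ‖v‖ ^ 2 := by rw [norm_sq2, norm_sq2, perp_zero, perp_one]; ring
  rw [← Real.sqrt_sq (norm_nonneg (perp v)), ← Real.sqrt_sq (norm_nonneg v), h]

lemma decomp (u : EuclideanSpace ℝ (Fin 2)) (hu : ‖u‖ = 1) (w v : EuclideanSpace ℝ (Fin 2)) :
    ⟪w, v⟫ = ⟪w, u⟫ * ⟪v, u⟫ + ⟪w, perp u⟫ * ⟪v, perp u⟫ := by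
  have h : u 0 ^ 2 + u 1 ^ 2 = 1 := by rw [← norm_sq2, hu]; norm_num
  simp only [inner2, perp_zero, perp_one]
  linear_combination (-(w 0 * v 0 + w 1 * v 1)) * h

lemma decomp_norm (u : EuclideanSpace ℝ (Fin 2)) (hu : ‖u‖ = 1) (w : EuclideanSpace ℝ (Fin 2)) :
    ⟪w, u⟫ ^ 2 + ⟪w, perp u⟫ ^ 2 = ‖w‖ ^ 2 := by
  have h : u 0 ^ 2 + u 1 ^ 2 = 1 := by rw [← norm_sq2, hu]; norm_num
  simp only [inner2, perp_zero, perp_one, norm_sq2]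
  linear_combination (w 0 ^ 2 + w 1 ^ 2) * h

lemma inner_perp_self (v : EuclideanSpace ℝ (Fin 2)) : ⟪v, perp v⟫ = 0 := by
  rw [inner2, perp_zero, perp_one]; ring

section wextLemmas
variable {ι : Type*} [Fintype ι] (p : ι → EuclideanSpace ℝ (Fin 2))
  (v : EuclideanSpace ℝ (Fin 2))

omit [Fintype ι] in
lemma wext_set_eq :
    {x : ℝ | ∃ a ∈ Set.range p, ∃ b ∈ Set.range p, x = ⟪a - b, v⟫}
      = (fun ij : ι × ι => ⟪p ij.1 - p ij.2, v⟫) '' Set.univ := by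
  ext x; constructor
  · rintro ⟨a, ⟨i, rfl⟩, b, ⟨j, rfl⟩, rfl⟩; exact ⟨(i, j), trivial, rfl⟩
  · rintro ⟨⟨i, j⟩, -, rfl⟩; exact ⟨p i, ⟨i, rfl⟩, p j, ⟨j, rfl⟩, rfl⟩

lemma wext_le (i j : ι) : ⟪p i - p j, v⟫ ≤ wext v (Set.range p) := by
  apply le_csSup
  · rw [wext_set_eq]; exact (Set.finite_univ.image _).bddAbove
  · exact ⟨p i, ⟨i, rfl⟩, p j, ⟨j, rfl⟩, rfl⟩

lemma wext_attained [Nonempty ι] : ∃ i j : ι, wext v (Set.range p) = ⟪p i - p j, v⟫ := by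
  have hmem : wext v (Set.range p) ∈
      {x : ℝ | ∃ a ∈ Set.range p, ∃ b ∈ Set.range p, x = ⟪a - b, v⟫} := by
    apply Set.Nonempty.csSup_mem
    · obtain ⟨i⟩ := (inferInstance : Nonempty ι)
      exact ⟨_, p i, ⟨i, rfl⟩, p i, ⟨i, rfl⟩, rfl⟩
    · rw [wext_set_eq]; exact Set.finite_univ.image _
  obtain ⟨x, ⟨i, rfl⟩, y, ⟨j, rfl⟩, hxy⟩ := hmem
  exact ⟨i, j, hxy⟩

end wextLemmas

set_option maxHeartbeats 1600000 in
lemma key_claim (ι : Type*) [Fintype ι] [Nonempty ι]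
    (p : ι → EuclideanSpace ℝ (Fin 2)) (D : ℝ) (hD0 : 0 < D)
    (a b : ι) (hdiam : ∀ i j, dist (p i) (p j) ≤ D) (hattain : dist (p a) (p b) = D)
    (u : EuclideanSpace ℝ (Fin 2)) (hu : u = D⁻¹ • (p a - p b))
    (z : ℝ) (hz : z = wext (perp u) (Set.range p) / D)
    (v : EuclideanSpace ℝ (Fin 2)) (hv : ‖v‖ = 1) :
    Real.sin (1/2 * Real.arcsin z) * D ≤ wext v (Set.range p) := by
  have hab_norm : ‖p a - p b‖ = D := by rw [← dist_eq_norm]; exact hattain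
  have hu_norm : ‖u‖ = 1 := by
    rw [hu, norm_smul, hab_norm, norm_inv, Real.norm_eq_abs, abs_of_pos hD0]
    field_simp
  have hab : p a - p b = D • u := by
    rw [hu, smul_smul, mul_inv_cancel₀ hD0.ne', one_smul]
  have hab_u : ⟪p a - p b, u⟫ = D := by
    rw [hab, real_inner_smul_left, real_inner_self_eq_norm_sq, hu_norm]; ring
  have hab_pu : ⟪p a - p b, perp u⟫ = 0 := by
    rw [hab, real_inner_smul_left, inner_perp_self]; ring
  have hwz : wext (perp u) (Set.range p) = z * D := by
    rw [hz]; field_simp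
  have hz0 : 0 ≤ z := by
    have h0 := wext_le p (perp u) a a
    rw [sub_self, inner_zero_left] at h0
    rw [hz]; positivity
  have hz1 : z ≤ 1 := by
    obtain ⟨i, j, hij⟩ := wext_attained p (perp u)
    have h1 : ⟪p i - p j, perp u⟫ ≤ ‖p i - p j‖ * ‖perp u‖ := real_inner_le_norm _ _
    have h2 : ‖p i - p j‖ ≤ D := by rw [← dist_eq_norm]; exact hdiam i j
    rw [norm_perp, hu_norm, mul_one] at h1
    have h3 : wext (perp u) (Set.range p) ≤ D := by rw [hij]; linarith
    rw [hwz] at h3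
    nlinarith
  set α := Real.arcsin z with hα
  have hα0 : 0 ≤ α := Real.arcsin_nonneg.mpr hz0
  have hα2 : α ≤ π / 2 := Real.arcsin_le_pi_div_two z
  have hsz : Real.sin α = z := Real.sin_arcsin (by linarith) hz1
  have hcz : Real.cos α = Real.sqrt (1 - z ^ 2) := by
    rw [hα, Real.cos_arcsin]
  have hs0 : 0 ≤ Real.sin (1/2 * α) :=
    Real.sin_nonneg_of_nonneg_of_le_pi (by linarith) (by linarith [Real.pi_pos])
  have hc0 : 0 ≤ Real.cos (1/2 * α) :=
    Real.cos_nonneg_of_mem_Icc ⟨by linarith [Real.pi_pos], by linarith⟩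
  have htrig : Real.sin α * Real.cos (1/2 * α) - Real.cos α * Real.sin (1/2 * α)
      = Real.sin (1/2 * α) := by
    rw [← Real.sin_sub]; congr 1; ring
  have hone : ⟪v, u⟫ ^ 2 + ⟪v, perp u⟫ ^ 2 = 1 := by
    rw [decomp_norm u hu_norm v, hv, one_pow]
  have hab_v : ⟪p a - p b, v⟫ = D * ⟪v, u⟫ := by
    rw [decomp u hu_norm, hab_u, hab_pu]; ring
  have h1 : D * ⟪v, u⟫ ≤ wext v (Set.range p) := by
    have h := wext_le p v a b; rw [hab_v] at h; exact h
  have h2 : -(D * ⟪v, u⟫) ≤ wext v (Set.range p) := by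
    have h := wext_le p v b a
    have heq : ⟪p b - p a, v⟫ = -(D * ⟪v, u⟫) := by
      rw [show p b - p a = -(p a - p b) by abel, inner_neg_left, hab_v]
    rw [heq] at h; exact h
  obtain ⟨i, j, hij⟩ := wext_attained p (perp u)
  have hij_pu : ⟪p i - p j, perp u⟫ = z * D := by rw [← hij, hwz]
  have he1sq : ⟪p i - p j, u⟫ ^ 2 ≤ D ^ 2 * (1 - z ^ 2) := by
    have hd := decomp_norm u hu_norm (p i - p j)
    have ha2 : ‖p i - p j‖ ≤ D := by rw [← dist_eq_norm]; exact hdiam i j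
    have h3 : ‖p i - p j‖ ^ 2 ≤ D ^ 2 := by nlinarith [norm_nonneg (p i - p j)]
    rw [hij_pu] at hd
    have hd' : ⟪p i - p j, u⟫ ^ 2 = ‖p i - p j‖ ^ 2 - z ^ 2 * D ^ 2 := by
      linear_combination hd
    linarith
  have hij_v : ⟪p i - p j, v⟫ = ⟪p i - p j, u⟫ * ⟪v, u⟫ + z * D * ⟪v, perp u⟫ := by
    rw [decomp u hu_norm, hij_pu]
  have h3 : ⟪p i - p j, u⟫ * ⟪v, u⟫ + z * D * ⟪v, perp u⟫ ≤ wext v (Set.range p) := by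
    have h := wext_le p v i j; rw [hij_v] at h; exact h
  have h4 : -(⟪p i - p j, u⟫ * ⟪v, u⟫ + z * D * ⟪v, perp u⟫) ≤ wext v (Set.range p) := by
    have h := wext_le p v j i
    have heq : ⟪p j - p i, v⟫ = -(⟪p i - p j, u⟫ * ⟪v, u⟫ + z * D * ⟪v, perp u⟫) := by
      rw [show p j - p i = -(p i - p j) by abel, inner_neg_left, hij_v]
    rw [heq] at h; exact h
  by_cases hcase : Real.sin (1/2 * α) ≤ |⟪v, u⟫|
  · have habs : |D * ⟪v, u⟫| ≤ wext v (Set.range p) := abs_le.mpr ⟨by linarith, h1⟩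
    rw [abs_mul, abs_of_pos hD0] at habs
    have h6 : Real.sin (1/2 * α) * D ≤ D * |⟪v, u⟫| := by
      rw [mul_comm]; exact mul_le_mul_of_nonneg_left hcase hD0.le
    linarith
  · rw [not_le] at hcase
    have hee : Real.cos (1/2 * α) ≤ |⟪v, perp u⟫| := by
      have hsum := Real.sin_sq_add_cos_sq (1/2 * α)
      have h5 : Real.cos (1/2 * α) ^ 2 ≤ ⟪v, perp u⟫ ^ 2 := by
        nlinarith [abs_nonneg ⟪v, u⟫, sq_abs ⟪v, u⟫]
      calc Real.cos (1/2 * α) = Real.sqrt (Real.cos (1/2 * α) ^ 2) :=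
            (Real.sqrt_sq hc0).symm
        _ ≤ Real.sqrt (⟪v, perp u⟫ ^ 2) := Real.sqrt_le_sqrt h5
        _ = |⟪v, perp u⟫| := Real.sqrt_sq_eq_abs _
    have he1 : |⟪p i - p j, u⟫| ≤ D * Real.sqrt (1 - z ^ 2) := by
      calc |⟪p i - p j, u⟫| = Real.sqrt (⟪p i - p j, u⟫ ^ 2) := (Real.sqrt_sq_eq_abs _).symm
        _ ≤ Real.sqrt (D ^ 2 * (1 - z ^ 2)) := Real.sqrt_le_sqrt he1sq
        _ = D * Real.sqrt (1 - z ^ 2) := by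
            rw [Real.sqrt_mul (by positivity), Real.sqrt_sq hD0.le]
    have habs : |⟪p i - p j, u⟫ * ⟪v, u⟫ + z * D * ⟪v, perp u⟫| ≤ wext v (Set.range p) :=
      abs_le.mpr ⟨by linarith, h3⟩
    have hlow : z * D * |⟪v, perp u⟫| - |⟪p i - p j, u⟫| * |⟪v, u⟫|
        ≤ |⟪p i - p j, u⟫ * ⟪v, u⟫ + z * D * ⟪v, perp u⟫| := by
      have h := abs_sub_abs_le_abs_sub (z * D * ⟪v, perp u⟫) (-(⟪p i - p j, u⟫ * ⟪v, u⟫))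
      rw [abs_neg, sub_neg_eq_add] at h
      calc z * D * |⟪v, perp u⟫| - |⟪p i - p j, u⟫| * |⟪v, u⟫|
          = |z * D * ⟪v, perp u⟫| - |⟪p i - p j, u⟫ * ⟪v, u⟫| := by
            rw [abs_mul, abs_mul, abs_mul, abs_of_nonneg hz0, abs_of_pos hD0]
        _ ≤ |z * D * ⟪v, perp u⟫ + ⟪p i - p j, u⟫ * ⟪v, u⟫| := h
        _ = |⟪p i - p j, u⟫ * ⟪v, u⟫ + z * D * ⟪v, perp u⟫| := by rw [add_comm]
    have hfin : Real.sin (1/2 * α) * D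
        = z * D * Real.cos (1/2 * α) - (D * Real.sqrt (1 - z ^ 2)) * Real.sin (1/2 * α) := by
      rw [← hcz, ← hsz]; linear_combination (-D) * htrig
    have hA : z * D * Real.cos (1/2 * α) ≤ z * D * |⟪v, perp u⟫| :=
      mul_le_mul_of_nonneg_left hee (by positivity)
    have hB : |⟪p i - p j, u⟫| * |⟪v, u⟫| ≤ (D * Real.sqrt (1 - z ^ 2)) * Real.sin (1/2 * α) :=
      mul_le_mul he1 hcase.le (abs_nonneg _) (by positivity)
    linarith


set_option maxHeartbeats 1600000 in
theorem stmt_11 (ι : Type*) [Fintype ι] [Nonempty ι]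
    (p : ι → EuclideanSpace ℝ (Fin 2)) (D : ℝ) (hD : 1 ≤ D)
    (a b : ι) (hdiam : ∀ i j, dist (p i) (p j) ≤ D) (hattain : dist (p a) (p b) = D)
    (u : EuclideanSpace ℝ (Fin 2)) (hu : u = D⁻¹ • (p a - p b))
    (z : ℝ) (hz : z = wext (perp u) (Set.range p) / D)
    (Δt : ℝ) (hΔt₀ : 0 ≤ Δt) (hΔt₁ : Δt ≤ Real.sin (1/2 * Real.arcsin z) / 2)
    (q : ι → EuclideanSpace ℝ (Fin 2)) (hq : ∀ i, ‖q i - p i‖ ≤ Δt)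
    (D' : ℝ) (c d : ι)
    (hdiam' : ∀ i j, dist (q i) (q j) ≤ D') (hattain' : dist (q c) (q d) = D')
    (u' : EuclideanSpace ℝ (Fin 2)) (hu' : u' = D'⁻¹ • (q c - q d))
    (z' : ℝ) (hz' : z' = wext (perp u') (Set.range q) / D') :
    z' ≥ (Real.sin (1/2 * Real.arcsin z) - 2 * Δt) / (1 + 2 * Δt) := by
  have hD0 : (0:ℝ) < D := lt_of_lt_of_le one_pos hD
  set s := Real.sin (1/2 * Real.arcsin z) with hs_def
  -- basic facts about u and z (as in key_claim)
  have hab_norm : ‖p a - p b‖ = D := by rw [← dist_eq_norm]; exact hattain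
  have hu_norm : ‖u‖ = 1 := by
    rw [hu, norm_smul, hab_norm, norm_inv, Real.norm_eq_abs, abs_of_pos hD0]
    field_simp
  have hwz : wext (perp u) (Set.range p) = z * D := by rw [hz]; field_simp
  have hz0 : 0 ≤ z := by
    have h0 := wext_le p (perp u) a a
    rw [sub_self, inner_zero_left] at h0
    rw [hz]; positivity
  have hz1 : z ≤ 1 := by
    obtain ⟨i, j, hij⟩ := wext_attained p (perp u)
    have h1 : ⟪p i - p j, perp u⟫ ≤ ‖p i - p j‖ * ‖perp u‖ := real_inner_le_norm _ _
    have h2 : ‖p i - p j‖ ≤ D := by rw [← dist_eq_norm]; exact hdiam i j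
    rw [norm_perp, hu_norm, mul_one] at h1
    have h3 : wext (perp u) (Set.range p) ≤ D := by rw [hij]; linarith
    rw [hwz] at h3
    nlinarith
  have hα0 : 0 ≤ Real.arcsin z := Real.arcsin_nonneg.mpr hz0
  have hα2 : Real.arcsin z ≤ π / 2 := Real.arcsin_le_pi_div_two z
  have hs0 : 0 ≤ s :=
    Real.sin_nonneg_of_nonneg_of_le_pi (by linarith) (by linarith [Real.pi_pos])
  have hc_ge : Real.sqrt 2 / 2 ≤ Real.cos (1/2 * Real.arcsin z) := by
    have h := Real.cos_le_cos_of_nonneg_of_le_pi (by linarith : (0:ℝ) ≤ 1/2 * Real.arcsin z)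
      (by linarith [Real.pi_pos] : π/4 ≤ π) (by linarith : 1/2 * Real.arcsin z ≤ π/4)
    rw [Real.cos_pi_div_four] at h
    exact h
  have hs1 : s < 1 := by
    have hsum := Real.sin_sq_add_cos_sq (1/2 * Real.arcsin z)
    have h2 : Real.sqrt 2 ^ 2 = 2 := Real.sq_sqrt (by norm_num)
    nlinarith [Real.sqrt_nonneg 2]
  have h2Δt : 2 * Δt ≤ s := by linarith
  -- D' bounds
  have hd1 : ∀ i, dist (p i) (q i) ≤ Δt := fun i => by
    rw [dist_comm, dist_eq_norm]; exact hq i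
  have hD'lb : D - 2 * Δt ≤ D' := by
    have h4 := dist_triangle4 (p a) (q a) (q b) (p b)
    rw [hattain] at h4
    have h5 := hdiam' a b
    have h6 := hd1 a
    have h7 : dist (q b) (p b) ≤ Δt := by rw [dist_comm]; exact hd1 b
    linarith
  have hD'pos : 0 < D' := by linarith
  have hD'ub : D' ≤ D + 2 * Δt := by
    have h4 := dist_triangle4 (q c) (p c) (p d) (q d)
    rw [hattain'] at h4
    have h5 := hdiam c d
    have h6 : dist (q c) (p c) ≤ Δt := by rw [dist_comm]; exact hd1 c
    have h7 := hd1 d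
    linarith
  -- perp u' is a unit vector
  have hcd_norm : ‖q c - q d‖ = D' := by rw [← dist_eq_norm]; exact hattain'
  have hv : ‖perp u'‖ = 1 := by
    rw [norm_perp, hu', norm_smul, hcd_norm, norm_inv, Real.norm_eq_abs, abs_of_pos hD'pos]
    field_simp
  -- the key claim applied to direction perp u'
  have hkey := key_claim ι p D hD0 a b hdiam hattain u hu z hz (perp u') hv
  obtain ⟨i, j, hij⟩ := wext_attained p (perp u')
  have hPij : s * D ≤ ⟪p i - p j, perp u'⟫ := by rw [← hij]; exact hkey
  -- after the motion
  have hsplit : q i - q j = (p i - p j) + ((q i - p i) - (q j - p j)) := by abel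
  have hb1 : |⟪q i - p i, perp u'⟫| ≤ Δt := by
    have h := abs_real_inner_le_norm (q i - p i) (perp u')
    rw [hv, mul_one] at h
    exact h.trans (hq i)
  have hb2 : |⟪q j - p j, perp u'⟫| ≤ Δt := by
    have h := abs_real_inner_le_norm (q j - p j) (perp u')
    rw [hv, mul_one] at h
    exact h.trans (hq j)
  have hQij : s * D - 2 * Δt ≤ ⟪q i - q j, perp u'⟫ := by
    rw [show q i - q j = (p i - p j) + (q i - p i) - (q j - p j) by abel,
      inner_sub_left, inner_add_left]
    have e1 := abs_le.mp hb1
    have e2 := abs_le.mp hb2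
    linarith
  have hW' : s * D - 2 * Δt ≤ wext (perp u') (Set.range q) :=
    hQij.trans (wext_le q (perp u') i j)
  -- conclude
  rw [hz', ge_iff_le, div_le_div_iff₀ (by linarith) hD'pos]
  have hc1 : (s - 2 * Δt) * D' ≤ (s - 2 * Δt) * (D + 2 * Δt) :=
    mul_le_mul_of_nonneg_left hD'ub (by linarith)
  have hc2 : (s - 2 * Δt) * (D + 2 * Δt) ≤ (s * D - 2 * Δt) * (1 + 2 * Δt) := by
    have h := mul_nonneg hΔt₀ (mul_nonneg (by linarith : (0:ℝ) ≤ s + 1)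
      (by linarith : (0:ℝ) ≤ D - 1))
    nlinarith [h]
  have hc3 : (s * D - 2 * Δt) * (1 + 2 * Δt) ≤ wext (perp u') (Set.range q) * (1 + 2 * Δt) :=
    mul_le_mul_of_nonneg_right hW' (by linarith)
  linarith

end
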